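/- Let L ∈ ℝ^{n×n} be the Laplacian of a connected undirected graph (symmetric positive semidefinite, zero row sums, nonpositive off-diagonal entries, with grounded Laplacian L[2:n] positive definite). For an attachment node i ∈ {1,…,n}, let L'ᵢ ∈ ℝ^{(n+3)×(n+3)} be the Laplacian obtained by attaching to node i a cluster consisting of one leaf (node n+1) and a path of length 2 (nodes n+2, n+3): L'ᵢ = [[L + 2eᵢeᵢᵀ, −eᵢ, −eᵢ, 0], [−eᵢᵀ, 1, 0, 0], [−eᵢᵀ, 0, 2, −1], [0, 0, −1, 1]]. Then L'ᵢ[2:n+3] is positive definite and Tr((L'ᵢ[2:n+3])⁻¹) ≥ C + 4, where C = min over j ∈ {1,…,n} of Tr(((L + 2eⱼeⱼᵀ)[2:n])⁻¹); equivalently, the controllability Gramian P = ½(L'ᵢ[2:n+3])⁻¹ satisfies Tr(P) ≥ (C+4)/2. -/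

import Mathlib

open Matrix

/-- The principal submatrix of `A` obtained by deleting the row and column
indexed by `i₀` (grounding at node `i₀`). -/
def dropIdx {m : Type*} (i₀ : m) (A : Matrix m m ℝ) :
    Matrix {i : m // i ≠ i₀} {i : m // i ≠ i₀} ℝ :=
  A.submatrix Subtype.val Subtype.val

/-- The Laplacian obtained from `L` by attaching to node `i` a cluster consisting of
one leaf (new node `0`) and a path of length 2 (new nodes `1`, `2`):
`[[L + 2eᵢeᵢᵀ, −eᵢ, −eᵢ, 0], [−eᵢᵀ, 1, 0, 0], [−eᵢᵀ, 0, 2, −1], [0, 0, −1, 1]]`. -/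
noncomputable def clusterAttach {n : ℕ} (L : Matrix (Fin n) (Fin n) ℝ) (i : Fin n) :
    Matrix (Fin n ⊕ Fin 3) (Fin n ⊕ Fin 3) ℝ :=
  Matrix.fromBlocks
    (L + (2 : ℝ) • Matrix.vecMulVec (Pi.single i 1) (Pi.single i 1))
    (Matrix.of fun (j : Fin n) (k : Fin 3) =>
      if k = 2 then (0 : ℝ) else -((Pi.single i 1 : Fin n → ℝ) j))
    (Matrix.of fun (k : Fin 3) (j : Fin n) =>
      if k = 2 then (0 : ℝ) else -((Pi.single i 1 : Fin n → ℝ) j))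
    !![1, 0, 0; 0, 2, -1; 0, -1, 1]

namespace ClusterAux

variable {m : Type*} [Fintype m] [DecidableEq m]

lemma quad_nonneg {M : Matrix m m ℝ} (hM : M.PosSemidef) (x : m → ℝ) :
    0 ≤ x ⬝ᵥ M *ᵥ x := by simpa using hM.dotProduct_mulVec_nonneg x

lemma quad_pos {M : Matrix m m ℝ} (hM : M.PosDef) {x : m → ℝ} (hx : x ≠ 0) :
    0 < x ⬝ᵥ M *ᵥ x := by simpa using hM.dotProduct_mulVec_pos hx

lemma vecMul_symm {M : Matrix m m ℝ} (hM : M.IsHermitian) (x : m → ℝ) :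
    x ᵥ* M = M *ᵥ x := by
  have ht : Mᵀ = M := by
    rw [← conjTranspose_eq_transpose_of_trivial]; exact hM
  conv_lhs => rw [← ht]
  rw [vecMul_transpose]

/-- The key variational inequality: for positive definite `M`,
`(M⁻¹)ₖₖ ≥ 2 yₖ - yᵀ M y` for every `y`. -/
lemma inv_diag_lower {M : Matrix m m ℝ} (hM : M.PosDef) (k : m) (y : m → ℝ) :
    2 * y k - y ⬝ᵥ M *ᵥ y ≤ M⁻¹ k k := by
  have hdet : IsUnit M.det := isUnit_iff_ne_zero.mpr hM.det_pos.ne'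
  have hmul : M * M⁻¹ = 1 := Matrix.mul_nonsing_inv M hdet
  set s : m → ℝ := Pi.single k 1 with hs
  set u : m → ℝ := M⁻¹ *ᵥ s with hu
  have hMu : M *ᵥ u = s := by
    rw [hu, Matrix.mulVec_mulVec, hmul, Matrix.one_mulVec]
  have huk : u k = M⁻¹ k k := by simp [hu, hs, Matrix.mulVec_single]
  have e1 : u ⬝ᵥ s = M⁻¹ k k := by rw [hs, dotProduct_single, mul_one]; exact huk
  have e2 : y ⬝ᵥ s = y k := by rw [hs, dotProduct_single, mul_one]
  have e3 : u ⬝ᵥ M *ᵥ y = y k := by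
    rw [Matrix.dotProduct_mulVec, vecMul_symm hM.1, hMu, hs, single_dotProduct, one_mul]
  have h0 : 0 ≤ (u - y) ⬝ᵥ M *ᵥ (u - y) := quad_nonneg hM.posSemidef _
  rw [Matrix.mulVec_sub, dotProduct_sub, sub_dotProduct, sub_dotProduct, hMu,
    e1, e2, e3] at h0
  linarith

lemma trace_submatrix_equiv {l : Type*} [Fintype l] (A : Matrix m m ℝ) (e : l ≃ m) :
    (A.submatrix e e).trace = A.trace := by
  simp only [Matrix.trace, Matrix.diag, Matrix.submatrix_apply]
  exact Equiv.sum_comp e (fun j => A j j)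

lemma posDef_submatrix_equiv {l : Type*} [Fintype l] [DecidableEq l]
    {M : Matrix m m ℝ} (hM : M.PosDef) (e : l ≃ m) : (M.submatrix e e).PosDef := by
  refine PosDef.of_dotProduct_mulVec_pos (hM.1.submatrix e) fun x hx => ?_
  have hx' : (x ∘ e.symm) ≠ 0 := by
    intro h
    apply hx
    funext a
    simpa using congrFun h (e a)
  have h := hM.dotProduct_mulVec_pos hx'
  rw [star_trivial] at h ⊢
  calc x ⬝ᵥ (M.submatrix e e) *ᵥ x
      = x ⬝ᵥ ((M *ᵥ (x ∘ e.symm)) ∘ e) := by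
        rw [Matrix.submatrix_mulVec_equiv]
    _ = (x ∘ e.symm) ⬝ᵥ M *ᵥ (x ∘ e.symm) := by
        simp only [dotProduct, Function.comp_apply]
        exact Fintype.sum_equiv e _ _ (fun a => by simp)
    _ > 0 := h

variable {n : ℕ}

/-- Reindexing equivalence between the block sum type and the grounded index subtype. -/
def eqv (hn : 0 < n) :
    ({j : Fin n // j ≠ (⟨0, hn⟩ : Fin n)} ⊕ Fin 3) ≃
      {x : Fin n ⊕ Fin 3 // x ≠ Sum.inl (⟨0, hn⟩ : Fin n)} where
  toFun := Sum.elim (fun j => ⟨Sum.inl j.1, fun h => j.2 (Sum.inl.inj h)⟩)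
    (fun m => ⟨Sum.inr m, fun h => Sum.inr_ne_inl h⟩)
  invFun := fun x => match x with
    | ⟨Sum.inl j, h⟩ => Sum.inl ⟨j, fun hj => h (by rw [hj])⟩
    | ⟨Sum.inr m, _⟩ => Sum.inr m
  left_inv := by rintro (j | m) <;> rfl
  right_inv := by rintro ⟨(j | m), h⟩ <;> rfl

variable (hn : 0 < n) (L : Matrix (Fin n) (Fin n) ℝ) (i : Fin n)

/-- Grounded indicator vector of node `i`. -/
def ev : {j : Fin n // j ≠ (⟨0, hn⟩ : Fin n)} → ℝ := fun j => (Pi.single i 1 : Fin n → ℝ) j.1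

def A1 : Matrix {j : Fin n // j ≠ (⟨0, hn⟩ : Fin n)} {j : Fin n // j ≠ (⟨0, hn⟩ : Fin n)} ℝ :=
  dropIdx (⟨0, hn⟩ : Fin n)
    (L + (2 : ℝ) • Matrix.vecMulVec (Pi.single i 1) (Pi.single i 1))

def Bm : Matrix {j : Fin n // j ≠ (⟨0, hn⟩ : Fin n)} (Fin 3) ℝ :=
  Matrix.of fun j k => if k = 2 then (0 : ℝ) else -(ev hn i j)

def Cm : Matrix (Fin 3) {j : Fin n // j ≠ (⟨0, hn⟩ : Fin n)} ℝ :=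
  Matrix.of fun k j => if k = 2 then (0 : ℝ) else -(ev hn i j)

def Dm : Matrix (Fin 3) (Fin 3) ℝ := !![1, 0, 0; 0, 2, -1; 0, -1, 1]

def Nm : Matrix ({j : Fin n // j ≠ (⟨0, hn⟩ : Fin n)} ⊕ Fin 3)
    ({j : Fin n // j ≠ (⟨0, hn⟩ : Fin n)} ⊕ Fin 3) ℝ :=
  Matrix.fromBlocks (A1 hn L i) (Bm hn i) (Cm hn i) Dm

lemma Nm_eq : Nm hn L i =
    (dropIdx (Sum.inl ⟨0, hn⟩ : Fin n ⊕ Fin 3) (clusterAttach L i)).submatrix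
      (eqv hn) (eqv hn) := by
  ext a b
  cases a <;> cases b <;> rfl

lemma M_eq : dropIdx (Sum.inl ⟨0, hn⟩ : Fin n ⊕ Fin 3) (clusterAttach L i) =
    (Nm hn L i).submatrix (eqv hn).symm (eqv hn).symm := by
  rw [Nm_eq, Matrix.submatrix_submatrix, Equiv.self_comp_symm, Matrix.submatrix_id_id]

lemma A1_eq : A1 hn L i =
    dropIdx (⟨0, hn⟩ : Fin n) L + (2 : ℝ) • Matrix.vecMulVec (ev hn i) (ev hn i) := by
  ext j k
  simp [A1, dropIdx, Matrix.vecMulVec_apply, ev]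

lemma vecMulVec_ev_mulVec (u : {j : Fin n // j ≠ (⟨0, hn⟩ : Fin n)} → ℝ) :
    Matrix.vecMulVec (ev hn i) (ev hn i) *ᵥ u = (ev hn i ⬝ᵥ u) • ev hn i := by
  funext j
  simp only [Matrix.mulVec, Matrix.vecMulVec_apply, dotProduct, Pi.smul_apply,
    smul_eq_mul, Finset.sum_mul]
  exact Finset.sum_congr rfl fun k _ => by ring

lemma A1_quad (u : {j : Fin n // j ≠ (⟨0, hn⟩ : Fin n)} → ℝ) :
    u ⬝ᵥ (A1 hn L i) *ᵥ u =
      u ⬝ᵥ (dropIdx (⟨0, hn⟩ : Fin n) L) *ᵥ u + 2 * (ev hn i ⬝ᵥ u) ^ 2 := by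
  rw [A1_eq, Matrix.add_mulVec, dotProduct_add, Matrix.smul_mulVec,
    vecMulVec_ev_mulVec]
  rw [dotProduct_smul, dotProduct_smul, smul_eq_mul, smul_eq_mul,
    dotProduct_comm u (ev hn i)]
  ring

lemma quadN (u : {j : Fin n // j ≠ (⟨0, hn⟩ : Fin n)} → ℝ) (w : Fin 3 → ℝ) :
    Sum.elim u w ⬝ᵥ (Nm hn L i) *ᵥ Sum.elim u w =
      u ⬝ᵥ (A1 hn L i) *ᵥ u - 2 * (w 0 + w 1) * (ev hn i ⬝ᵥ u) +
        (w 0 ^ 2 + 2 * w 1 ^ 2 - 2 * w 1 * w 2 + w 2 ^ 2) := by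
  rw [Nm, Matrix.fromBlocks_mulVec, Sum.elim_comp_inl, Sum.elim_comp_inr,
    sumElim_dotProduct_sumElim, dotProduct_add, dotProduct_add]
  have hB : u ⬝ᵥ (Bm hn i) *ᵥ w = -(w 0 + w 1) * (ev hn i ⬝ᵥ u) := by
    simp only [Matrix.mulVec, dotProduct, Bm, Matrix.of_apply, Fin.sum_univ_three,
      show (0 : Fin 3) ≠ 2 by decide, show (1 : Fin 3) ≠ 2 by decide, if_neg, if_pos rfl,
      ite_false, ite_true, zero_mul, add_zero, neg_mul]
    rw [Finset.mul_sum, ← Finset.sum_neg_distrib]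
    exact Finset.sum_congr rfl fun j _ => by ring
  have hC : w ⬝ᵥ (Cm hn i) *ᵥ u = -(w 0 + w 1) * (ev hn i ⬝ᵥ u) := by
    simp only [Matrix.mulVec, dotProduct, Cm, Matrix.of_apply, Fin.sum_univ_three,
      show (0 : Fin 3) ≠ 2 by decide, show (1 : Fin 3) ≠ 2 by decide,
      ite_false, ite_true, zero_mul, mul_zero, add_zero, neg_mul, mul_neg,
      Finset.sum_neg_distrib, Finset.mul_sum]
    rw [Finset.sum_const_zero, add_zero, ← neg_add, ← Finset.sum_add_distrib]
    congr 1
    exact Finset.sum_congr rfl fun j _ => by ring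
  have hD : w ⬝ᵥ Dm *ᵥ w = w 0 ^ 2 + 2 * w 1 ^ 2 - 2 * w 1 * w 2 + w 2 ^ 2 := by
    simp [Dm, Matrix.mulVec, dotProduct, Fin.sum_univ_three, Matrix.vecHead, Matrix.vecTail]
    ring
  rw [hB, hC, hD]
  ring

lemma A1_symm (hsym : L.IsSymm) (j k : {j : Fin n // j ≠ (⟨0, hn⟩ : Fin n)}) :
    A1 hn L i k j = A1 hn L i j k := by
  rw [A1_eq]
  simp only [Matrix.add_apply, Matrix.smul_apply, Matrix.vecMulVec_apply, smul_eq_mul,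
    dropIdx, Matrix.submatrix_apply]
  rw [hsym.apply (j : Fin n) (k : Fin n)]
  ring

lemma Nm_isSymm (hsym : L.IsSymm) : (Nm hn L i).IsHermitian := by
  rw [Matrix.IsHermitian, conjTranspose_eq_transpose_of_trivial]
  ext a b
  cases a with
  | inl j =>
    cases b with
    | inl k => exact A1_symm hn L i hsym j k
    | inr m => rfl
  | inr m =>
    cases b with
    | inl k => rfl
    | inr m' =>
      show Dm m' m = Dm m m'
      fin_cases m <;> fin_cases m' <;> norm_num [Dm, Matrix.vecHead, Matrix.vecTail]

lemma A1_posDef (hsym : L.IsSymm)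
    (hground : (dropIdx (⟨0, hn⟩ : Fin n) L).PosDef) : (A1 hn L i).PosDef := by
  refine PosDef.of_dotProduct_mulVec_pos ?_ ?_
  · rw [Matrix.IsHermitian, conjTranspose_eq_transpose_of_trivial]
    ext j k
    exact A1_symm hn L i hsym j k
  · intro x hx
    rw [star_trivial, A1_quad]
    have h1 := quad_pos hground hx
    nlinarith [sq_nonneg (ev hn i ⬝ᵥ x)]

lemma Nm_posDef (hsym : L.IsSymm)
    (hground : (dropIdx (⟨0, hn⟩ : Fin n) L).PosDef) : (Nm hn L i).PosDef := by
  refine PosDef.of_dotProduct_mulVec_pos (Nm_isSymm hn L i hsym) fun x hx => ?_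
  rw [star_trivial]
  have hxe : x = Sum.elim (x ∘ Sum.inl) (x ∘ Sum.inr) := by
    funext a; cases a <;> rfl
  rw [hxe, quadN, A1_quad]
  set u := x ∘ Sum.inl with hu
  set w := x ∘ Sum.inr with hw
  set p := ev hn i ⬝ᵥ u with hp
  have key : u ⬝ᵥ (dropIdx (⟨0, hn⟩ : Fin n) L) *ᵥ u + 2 * p ^ 2
      - 2 * (w 0 + w 1) * p + (w 0 ^ 2 + 2 * w 1 ^ 2 - 2 * w 1 * w 2 + w 2 ^ 2) =
      u ⬝ᵥ (dropIdx (⟨0, hn⟩ : Fin n) L) *ᵥ u +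
        ((p - w 0) ^ 2 + (p - w 1) ^ 2 + (w 1 - w 2) ^ 2) := by ring
  rw [key]
  by_cases hu0 : u = 0
  · have hq : u ⬝ᵥ (dropIdx (⟨0, hn⟩ : Fin n) L) *ᵥ u = 0 := by
      rw [hu0]; simp
    have hp0 : p = 0 := by rw [hp, hu0]; simp
    have hw0 : w ≠ 0 := by
      intro h
      apply hx
      funext a
      cases a with
      | inl j => exact congrFun hu0 j
      | inr m => exact congrFun h m
    have : w 0 ≠ 0 ∨ w 1 ≠ 0 ∨ w 2 ≠ 0 := by
      by_contra h
      push_neg at h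
      apply hw0
      funext a
      fin_cases a
      · exact h.1
      · exact h.2.1
      · exact h.2.2
    rw [hq, hp0]
    rcases this with h | h | h
    · nlinarith [sq_pos_of_ne_zero h, sq_nonneg (0 - w 1), sq_nonneg (w 1 - w 2)]
    · nlinarith [sq_pos_of_ne_zero h, sq_nonneg (0 - w 0), sq_nonneg (w 1 - w 2)]
    · by_cases h1 : w 1 = 0
      · have : w 1 - w 2 ≠ 0 := by rw [h1]; simpa using h
        nlinarith [sq_pos_of_ne_zero this, sq_nonneg (0 - w 0), sq_nonneg (0 - w 1)]
      · nlinarith [sq_pos_of_ne_zero h1, sq_nonneg (0 - w 0), sq_nonneg (w 1 - w 2)]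
  · have h1 := quad_pos hground hu0
    nlinarith [sq_nonneg (p - w 0), sq_nonneg (p - w 1), sq_nonneg (w 1 - w 2)]

def Dinv : Matrix (Fin 3) (Fin 3) ℝ := !![1, 0, 0; 0, 1, 1; 0, 1, 2]

lemma diag_inl (hsym : L.IsSymm)
    (hground : (dropIdx (⟨0, hn⟩ : Fin n) L).PosDef)
    (j : {j : Fin n // j ≠ (⟨0, hn⟩ : Fin n)}) :
    (A1 hn L i)⁻¹ j j ≤ (Nm hn L i)⁻¹ (Sum.inl j) (Sum.inl j) := by
  have hA1 := A1_posDef hn L i hsym hground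
  have hdet : IsUnit (A1 hn L i).det := isUnit_iff_ne_zero.mpr hA1.det_pos.ne'
  set s : {j : Fin n // j ≠ (⟨0, hn⟩ : Fin n)} → ℝ := Pi.single j 1 with hs
  set u := (A1 hn L i)⁻¹ *ᵥ s with hu
  have hMu : (A1 hn L i) *ᵥ u = s := by
    rw [hu, Matrix.mulVec_mulVec, Matrix.mul_nonsing_inv _ hdet, Matrix.one_mulVec]
  have huj : u j = (A1 hn L i)⁻¹ j j := by simp [hu, hs, Matrix.mulVec_single]
  have hq : u ⬝ᵥ (A1 hn L i) *ᵥ u = (A1 hn L i)⁻¹ j j := by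
    rw [hMu, hs, dotProduct_single, mul_one]
    exact huj
  have h := inv_diag_lower (Nm_posDef hn L i hsym hground) (Sum.inl j)
    (Sum.elim u (0 : Fin 3 → ℝ))
  rw [quadN] at h
  simp only [Sum.elim_inl, Pi.zero_apply] at h
  rw [hq] at h
  norm_num at h
  linarith

lemma diag_inr (hsym : L.IsSymm)
    (hground : (dropIdx (⟨0, hn⟩ : Fin n) L).PosDef) (m : Fin 3) :
    Dinv m m ≤ (Nm hn L i)⁻¹ (Sum.inr m) (Sum.inr m) := by
  have hA1 := A1_posDef hn L i hsym hground
  have hdet : IsUnit (A1 hn L i).det := isUnit_iff_ne_zero.mpr hA1.det_pos.ne'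
  have hMu : (A1 hn L i) *ᵥ ((A1 hn L i)⁻¹ *ᵥ ev hn i) = ev hn i := by
    rw [Matrix.mulVec_mulVec, Matrix.mul_nonsing_inv _ hdet, Matrix.one_mulVec]
  have htnn : 0 ≤ ev hn i ⬝ᵥ ((A1 hn L i)⁻¹ *ᵥ ev hn i) :=
    quad_nonneg hA1.inv.posSemidef _
  have h := inv_diag_lower (Nm_posDef hn L i hsym hground) (Sum.inr m)
    (Sum.elim ((A1 hn L i)⁻¹ *ᵥ ev hn i) (fun m' => Dinv m' m))
  rw [quadN] at h
  simp only [Sum.elim_inr] at h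
  have hq : ((A1 hn L i)⁻¹ *ᵥ ev hn i) ⬝ᵥ (A1 hn L i) *ᵥ ((A1 hn L i)⁻¹ *ᵥ ev hn i) =
      ev hn i ⬝ᵥ ((A1 hn L i)⁻¹ *ᵥ ev hn i) := by
    rw [hMu, dotProduct_comm]
  have hw01 : Dinv 0 m + Dinv 1 m = 1 := by fin_cases m <;> norm_num [Dinv, Matrix.vecHead, Matrix.vecTail]
  have hwq : Dinv 0 m ^ 2 + 2 * Dinv 1 m ^ 2 - 2 * Dinv 1 m * Dinv 2 m + Dinv 2 m ^ 2 =
      Dinv m m := by fin_cases m <;> norm_num [Dinv, Matrix.vecHead, Matrix.vecTail, Matrix.cons_val_two]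
  rw [hq, hw01, hwq] at h
  linarith

end ClusterAux

theorem cluster_attach_gramian_bound {n : ℕ} (hn : 0 < n)
    (L : Matrix (Fin n) (Fin n) ℝ)
    (hsym : L.IsSymm) (hpsd : L.PosSemidef)
    (hrow : ∀ i, ∑ j, L i j = 0)
    (hoff : ∀ i j, i ≠ j → L i j ≤ 0)
    (hground : (dropIdx (⟨0, hn⟩ : Fin n) L).PosDef)
    (i : Fin n) :
    (dropIdx (Sum.inl ⟨0, hn⟩ : Fin n ⊕ Fin 3) (clusterAttach L i)).PosDef ∧
    Matrix.trace ((dropIdx (Sum.inl ⟨0, hn⟩ : Fin n ⊕ Fin 3) (clusterAttach L i))⁻¹)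
      ≥ (Finset.univ.inf' ⟨⟨0, hn⟩, Finset.mem_univ _⟩ fun j : Fin n =>
          Matrix.trace ((dropIdx (⟨0, hn⟩ : Fin n)
            (L + (2 : ℝ) • Matrix.vecMulVec (Pi.single j 1) (Pi.single j 1)))⁻¹)) + 4 ∧
    Matrix.trace
        ((2 : ℝ)⁻¹ • (dropIdx (Sum.inl ⟨0, hn⟩ : Fin n ⊕ Fin 3) (clusterAttach L i))⁻¹)
      ≥ ((Finset.univ.inf' ⟨⟨0, hn⟩, Finset.mem_univ _⟩ fun j : Fin n =>
          Matrix.trace ((dropIdx (⟨0, hn⟩ : Fin n)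
            (L + (2 : ℝ) • Matrix.vecMulVec (Pi.single j 1) (Pi.single j 1)))⁻¹)) + 4) / 2 := by
  classical
  open ClusterAux in
  have hNpd := Nm_posDef hn L i hsym hground
  have hMeq := M_eq hn L i
  -- positive definiteness
  have hpd : (dropIdx (Sum.inl ⟨0, hn⟩ : Fin n ⊕ Fin 3) (clusterAttach L i)).PosDef := by
    rw [hMeq]
    exact posDef_submatrix_equiv hNpd (eqv hn).symm
  -- trace identity
  have htr : Matrix.trace ((dropIdx (Sum.inl ⟨0, hn⟩ : Fin n ⊕ Fin 3)
      (clusterAttach L i))⁻¹) = Matrix.trace ((Nm hn L i)⁻¹) := by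
    rw [hMeq, Matrix.inv_submatrix_equiv]
    exact trace_submatrix_equiv _ _
  -- trace of Nm⁻¹ bound
  have hbound : Matrix.trace ((Nm hn L i)⁻¹) ≥
      Matrix.trace ((A1 hn L i)⁻¹) + 4 := by
    have hsum : Matrix.trace ((Nm hn L i)⁻¹) =
        (∑ j, (Nm hn L i)⁻¹ (Sum.inl j) (Sum.inl j)) +
          (∑ m : Fin 3, (Nm hn L i)⁻¹ (Sum.inr m) (Sum.inr m)) := by
      rw [Matrix.trace]
      exact Fintype.sum_sum_type (fun a => (Nm hn L i)⁻¹.diag a)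
    rw [hsum]
    have h1 : (∑ j, (A1 hn L i)⁻¹ j j) ≤ ∑ j, (Nm hn L i)⁻¹ (Sum.inl j) (Sum.inl j) :=
      Finset.sum_le_sum fun j _ => diag_inl hn L i hsym hground j
    have h2 : (4 : ℝ) ≤ ∑ m : Fin 3, (Nm hn L i)⁻¹ (Sum.inr m) (Sum.inr m) := by
      have := Finset.sum_le_sum (s := (Finset.univ : Finset (Fin 3))) fun m _ => diag_inr hn L i hsym hground m
      have hd : (∑ m : Fin 3, Dinv m m) = 4 := by norm_num [Fin.sum_univ_three, Dinv, Matrix.vecHead, Matrix.vecTail, Matrix.cons_val_two]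
      rw [hd] at this
      exact this
    have htrA : Matrix.trace ((A1 hn L i)⁻¹) = ∑ j, (A1 hn L i)⁻¹ j j := rfl
    rw [htrA]
    linarith
  -- the min is at most the i-th term, which is trace (A1⁻¹)
  have hmin : (Finset.univ.inf' ⟨⟨0, hn⟩, Finset.mem_univ _⟩ fun j : Fin n =>
      Matrix.trace ((dropIdx (⟨0, hn⟩ : Fin n)
        (L + (2 : ℝ) • Matrix.vecMulVec (Pi.single j 1) (Pi.single j 1)))⁻¹)) ≤
      Matrix.trace ((A1 hn L i)⁻¹) :=
    Finset.inf'_le _ (Finset.mem_univ i)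
  refine ⟨hpd, ?_, ?_⟩
  · rw [htr]; linarith
  · rw [Matrix.trace_smul, smul_eq_mul, htr]
    have : Matrix.trace ((Nm hn L i)⁻¹) ≥ (Finset.univ.inf' ⟨⟨0, hn⟩, Finset.mem_univ _⟩
      fun j : Fin n => Matrix.trace ((dropIdx (⟨0, hn⟩ : Fin n)
        (L + (2 : ℝ) • Matrix.vecMulVec (Pi.single j 1) (Pi.single j 1)))⁻¹)) + 4 := by
      linarith
    linarith
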